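/- Let S and T be strings of the same length n that are permutations of each other, and let π : Fin n → Fin n be the canonical matching, i.e. the unique bijection such that T(π(i)) = S(i) for every i and such that, for every symbol α, π is strictly increasing on the set of positions of the occurrences of α in S (so the k-th occurrence of α in S is sent to the position of the k-th occurrence of α in T). Then the minimum number of adjacent swaps transforming S into T equals the number of inversions of π, i.e. the cardinality of { (i, j) : i < j and π(j) < π(i) }. -/

import Mathlib

/-- `StepsIn R k S T` holds if there is a sequence of exactly `k` steps of the
relation `R` transforming `S` into `T`. -/
def StepsIn {α : Type*} (R : List α → List α → Prop) : ℕ → List α → List α → Prop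
  | 0, S, T => S = T
  | n + 1, S, T => ∃ M, R S M ∧ StepsIn R n M T

/-- A single adjacent swap: exchanging the characters at two consecutive positions. -/
inductive SwapStep {α : Type*} : List α → List α → Prop
  | swap (U V : List α) (a b : α) : SwapStep (U ++ [a, b] ++ V) (U ++ [b, a] ++ V)

/-- The number of inversions of a map between finite index sets:
the number of pairs `(i, j)` with `i < j` and `π j < π i`. -/
def inversions {n m : ℕ} (π : Fin n → Fin m) : ℕ :=
  (Finset.univ.filter (fun p : Fin n × Fin n => p.1 < p.2 ∧ π p.2 < π p.1)).card

namespace SwapAux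

open Finset

/-- Adjacent transposition on natural number indices. -/
def τn (u i : ℕ) : ℕ := if i = u then u + 1 else if i = u + 1 then u else i

lemma τn_lt {n u i : ℕ} (hu : u + 1 < n) (hi : i < n) : τn u i < n := by
  unfold τn; split_ifs <;> omega

/-- Adjacent transposition as an equivalence of `Fin n`. -/
def τe {n : ℕ} (u : ℕ) (hu : u + 1 < n) : Fin n ≃ Fin n :=
  Equiv.swap ⟨u, Nat.lt_of_succ_lt hu⟩ ⟨u + 1, hu⟩

lemma τe_val {n : ℕ} (u : ℕ) (hu : u + 1 < n) (i : Fin n) :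
    (τe u hu i : ℕ) = τn u i.val := by
  rcases eq_or_ne i ⟨u, Nat.lt_of_succ_lt hu⟩ with h | h
  · subst h; rw [τe, Equiv.swap_apply_left]; simp [τn]
  · rcases eq_or_ne i ⟨u + 1, hu⟩ with h2 | h2
    · subst h2; rw [τe, Equiv.swap_apply_right]; simp [τn]
    · rw [τe, Equiv.swap_apply_of_ne_of_ne h h2]
      have h3 : i.val ≠ u := fun hh => h (Fin.ext hh)
      have h4 : i.val ≠ u + 1 := fun hh => h2 (Fin.ext hh)
      simp [τn, h3, h4]

lemma τe_invol {n : ℕ} (u : ℕ) (hu : u + 1 < n) (i : Fin n) :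
    τe u hu (τe u hu i) = i := Equiv.swap_apply_self _ _ i

lemma τe_lt {n : ℕ} {u : ℕ} (hu : u + 1 < n) {i j : Fin n} (hij : i < j)
    (hne : ¬(i = ⟨u, Nat.lt_of_succ_lt hu⟩ ∧ j = ⟨u + 1, hu⟩)) :
    τe u hu i < τe u hu j := by
  have hne' : ¬(i.val = u ∧ j.val = u + 1) := by
    rintro ⟨h1, h2⟩; exact hne ⟨Fin.ext h1, Fin.ext h2⟩
  rw [Fin.lt_def] at hij ⊢
  rw [τe_val, τe_val]
  simp only [τn]; split_ifs <;> omega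

lemma card_erase_add {β : Type*} [DecidableEq β] (s : Finset β) (x : β) :
    s.card = (s.erase x).card + (if x ∈ s then 1 else 0) := by
  by_cases h : x ∈ s
  · rw [if_pos h, Finset.card_erase_of_mem h,
      Nat.sub_add_cancel (Finset.card_pos.mpr ⟨x, h⟩)]
  · rw [if_neg h, Finset.erase_eq_of_notMem h]
    omega

lemma inversions_comp_cast {n n' m : ℕ} (f : Fin n → Fin m) (h : n' = n) :
    inversions (fun i => f (Fin.cast h i)) = inversions f := by
  subst h; rfl

lemma inversions_comp_swap {n m : ℕ} (f : Fin n → Fin m) (u : ℕ) (hu : u + 1 < n) :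
    inversions (fun i => f (τe u hu i))
      + (if f ⟨u + 1, hu⟩ < f ⟨u, Nat.lt_of_succ_lt hu⟩ then 1 else 0)
    = inversions f
      + (if f ⟨u, Nat.lt_of_succ_lt hu⟩ < f ⟨u + 1, hu⟩ then 1 else 0) := by
  classical
  set a : Fin n := ⟨u, Nat.lt_of_succ_lt hu⟩ with ha
  set b : Fin n := ⟨u + 1, hu⟩ with hb
  have hab : a < b := by simp only [ha, hb, Fin.mk_lt_mk]; omega
  set g : Fin n → Fin m := fun i => f (τe u hu i) with hg
  have hτa : τe u hu a = b := Equiv.swap_apply_left _ _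
  have hτb : τe u hu b = a := Equiv.swap_apply_right _ _
  set P := Finset.univ.filter (fun p : Fin n × Fin n => p.1 < p.2 ∧ g p.2 < g p.1) with hP
  set Q := Finset.univ.filter (fun p : Fin n × Fin n => p.1 < p.2 ∧ f p.2 < f p.1) with hQ
  have key : (P.erase (a, b)).card = (Q.erase (a, b)).card := by
    apply Finset.card_bij' (fun p _ => (τe u hu p.1, τe u hu p.2))
      (fun p _ => (τe u hu p.1, τe u hu p.2))
    · intro p hp
      rw [Finset.mem_erase, Finset.mem_filter] at hp
      obtain ⟨hpe, -, hlt, hcond⟩ := hp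
      rw [Finset.mem_erase, Finset.mem_filter]
      have hne : ¬(p.1 = a ∧ p.2 = b) := by
        rintro ⟨h1, h2⟩; exact hpe (Prod.ext h1 h2)
      refine ⟨?_, Finset.mem_univ _, τe_lt hu hlt hne, ?_⟩
      · intro hc
        rw [Prod.ext_iff] at hc
        have h1 : p.1 = b := by
          have := congrArg (τe u hu) hc.1; rwa [τe_invol, hτa] at this
        have h2 : p.2 = a := by
          have := congrArg (τe u hu) hc.2; rwa [τe_invol, hτb] at this
        rw [h1, h2] at hlt; exact absurd hab (asymm hlt)
      · simpa [hg] using hcond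
    · intro p hp
      rw [Finset.mem_erase, Finset.mem_filter] at hp
      obtain ⟨hpe, -, hlt, hcond⟩ := hp
      rw [Finset.mem_erase, Finset.mem_filter]
      have hne : ¬(p.1 = a ∧ p.2 = b) := by
        rintro ⟨h1, h2⟩; exact hpe (Prod.ext h1 h2)
      refine ⟨?_, Finset.mem_univ _, τe_lt hu hlt hne, ?_⟩
      · intro hc
        rw [Prod.ext_iff] at hc
        have h1 : p.1 = b := by
          have := congrArg (τe u hu) hc.1; rwa [τe_invol, hτa] at this
        have h2 : p.2 = a := by
          have := congrArg (τe u hu) hc.2; rwa [τe_invol, hτb] at this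
        rw [h1, h2] at hlt; exact absurd hab (asymm hlt)
      · simp only [hg, τe_invol]; exact hcond
    · intro p _; exact Prod.ext (τe_invol u hu p.1) (τe_invol u hu p.2)
    · intro p _; exact Prod.ext (τe_invol u hu p.1) (τe_invol u hu p.2)
  have hmemP : ((a, b) ∈ P) ↔ f a < f b := by
    rw [hP, Finset.mem_filter]
    simp only [Finset.mem_univ, true_and, hg, hτa, hτb]
    exact ⟨fun h => h.2, fun h => ⟨hab, h⟩⟩
  have hmemQ : ((a, b) ∈ Q) ↔ f b < f a := by
    rw [hQ, Finset.mem_filter]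
    simp only [Finset.mem_univ, true_and]
    exact ⟨fun h => h.2, fun h => ⟨hab, h⟩⟩
  have e1 : inversions g = P.card := rfl
  have e2 : inversions f = Q.card := rfl
  have c1 := card_erase_add P (a, b)
  have c2 := card_erase_add Q (a, b)
  rw [e1, e2, c1, c2, key]
  simp only [hmemP, hmemQ]
  split_ifs <;> omega

lemma strictMono_of_adj {n m : ℕ} (f : Fin n → Fin m)
    (h : ∀ u (hu : u + 1 < n), f ⟨u, Nat.lt_of_succ_lt hu⟩ < f ⟨u + 1, hu⟩) :
    StrictMono f := by
  have key : ∀ (b a : ℕ) (ha : a < n) (hb : b < n), a < b → f ⟨a, ha⟩ < f ⟨b, hb⟩ := by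
    intro b
    induction b with
    | zero => intro a _ _ hab; omega
    | succ b IH =>
      intro a ha hb hab
      rcases eq_or_lt_of_le (Nat.lt_succ_iff.mp hab) with h1 | h1
      · subst h1; exact h a hb
      · exact lt_trans (IH a ha (by omega) h1) (h b hb)
  intro i j hij
  have := key j.val i.val i.isLt j.isLt hij
  simpa using this

lemma inversions_eq_zero {n m : ℕ} (f : Fin n → Fin m)
    (h : ∀ i j : Fin n, i < j → ¬ f j < f i) : inversions f = 0 := by
  rw [inversions, Finset.card_eq_zero, Finset.filter_eq_empty_iff]
  rintro p - ⟨h1, h2⟩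
  exact h p.1 p.2 h1 h2

end SwapAux

open SwapAux

section Lists

variable {α : Type*}

lemma gec (l : List α) {i j : ℕ} (h : i = j) {hi : i < l.length} {hj : j < l.length} :
    l[i]'hi = l[j]'hj := by subst h; rfl

lemma getElem_mid (U V : List α) (a b : α) (i : ℕ) (h : i < (U ++ [a, b] ++ V).length) :
    (U ++ [a, b] ++ V)[i] =
      if h1 : i < U.length then U[i]
      else if h2 : i = U.length then a
      else if h3 : i = U.length + 1 then b
      else V[i - (U.length + 2)]'(by simp at h ⊢; omega) := by
  have hlen : (U ++ [a, b]).length = U.length + 2 := by simp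
  rw [List.getElem_append]
  split_ifs with hc h1 h2 h3 h1' h2' h3'
  · rw [List.getElem_append, dif_pos h1]
  · rw [List.getElem_append, dif_neg (by omega)]
    have : i - U.length = 0 := by omega
    simp [this]
  · rw [List.getElem_append, dif_neg (by omega)]
    have : i - U.length = 1 := by omega
    simp [this]
  · omega
  · omega
  · omega
  · omega
  · congr 1; omega

lemma length_mid (U V : List α) (a b : α) :
    (U ++ [a, b] ++ V).length = U.length + 2 + V.length := by
  simp; omega

lemma swapStep_data {S M : List α} (h : SwapStep S M) :
    ∃ u, ∃ hu : u + 1 < S.length, ∃ _hlen : M.length = S.length,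
      ∀ i (hi : i < S.length),
        M[i]'(by omega) = S[τn u i]'(τn_lt hu hi) := by
  cases h with
  | swap U V a b =>
    have hlen : (U ++ [b, a] ++ V).length = (U ++ [a, b] ++ V).length := by
      rw [length_mid, length_mid]
    have hu : U.length + 1 < (U ++ [a, b] ++ V).length := by rw [length_mid]; omega
    refine ⟨U.length, hu, hlen, ?_⟩
    intro i hi
    rw [getElem_mid, getElem_mid]
    simp only [τn]
    split_ifs <;> first | rfl | omega | (congr 1; omega)

lemma exists_swapStep (S : List α) (u : ℕ) (hu : u + 1 < S.length) :
    ∃ M : List α, SwapStep S M ∧ ∃ _hlen : M.length = S.length,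
      ∀ i (hi : i < S.length),
        M[i]'(by omega) = S[τn u i]'(τn_lt hu hi) := by
  have hul : u < S.length := Nat.lt_of_succ_lt hu
  have htl : (S.take u).length = u := by simp; omega
  have hS : S = S.take u ++ [S[u], S[u + 1]] ++ S.drop (u + 2) := by
    apply List.ext_getElem
    · rw [length_mid]; simp; omega
    · intro i h1 h2
      rw [getElem_mid]
      split_ifs with c1 c2 c3
      · exact List.getElem_take.symm
      · congr 1
        omega
      · congr 1
        omega
      · rw [List.getElem_drop]
        congr 1
        rw [htl] at c1 c2 c3 ⊢
        omega
  refine ⟨S.take u ++ [S[u + 1], S[u]] ++ S.drop (u + 2), ?_, ?_, ?_⟩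
  · have := SwapStep.swap (S.take u) (S.drop (u + 2)) (S[u]'hul) (S[u + 1]'hu)
    rwa [← hS] at this
  · rw [length_mid]; simp; omega
  · intro i hi
    rw [getElem_mid]
    split_ifs <;>
      first
        | (rw [List.getElem_take]; exact gec S (by simp only [τn]; split_ifs <;> omega))
        | (exact gec S (by simp only [τn]; split_ifs <;> omega))
        | (rw [List.getElem_drop]; exact gec S (by simp only [τn]; split_ifs <;> omega))

end Lists

section Matching

variable {α : Type*} [DecidableEq α]

lemma matching_unique (S T : List α) (π σ : Fin S.length ≃ Fin T.length)
    (hπ : ∀ i, T.get (π i) = S.get i)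
    (hπm : ∀ i j, i < j → S.get i = S.get j → π i < π j)
    (hσ : ∀ i, T.get (σ i) = S.get i)
    (hσm : ∀ i j, i < j → S.get i = S.get j → σ i < σ j)
    (i : Fin S.length) : π i = σ i := by
  classical
  set A : Finset (Fin S.length) := Finset.univ.filter (fun j => S.get j = S.get i) with hA
  set B : Finset (Fin T.length) := Finset.univ.filter (fun j => T.get j = S.get i) with hB
  have hπAB : ∀ j ∈ A, π j ∈ B := by
    intro j hj
    rw [hA, Finset.mem_filter] at hj
    rw [hB, Finset.mem_filter]
    exact ⟨Finset.mem_univ _, (hπ j).trans hj.2⟩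
  have hσAB : ∀ j ∈ A, σ j ∈ B := by
    intro j hj
    rw [hA, Finset.mem_filter] at hj
    rw [hB, Finset.mem_filter]
    exact ⟨Finset.mem_univ _, (hσ j).trans hj.2⟩
  have himg : A.image π = B := by
    apply Finset.ext
    intro b
    constructor
    · intro hb
      obtain ⟨a, ha, rfl⟩ := Finset.mem_image.mp hb
      exact hπAB a ha
    · intro hb
      rw [hB, Finset.mem_filter] at hb
      refine Finset.mem_image.mpr ⟨π.symm b, ?_, π.apply_symm_apply b⟩
      rw [hA, Finset.mem_filter]
      refine ⟨Finset.mem_univ _, ?_⟩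
      have := hπ (π.symm b)
      rw [π.apply_symm_apply] at this
      rw [← this, hb.2]
  have hcard : B.card = A.card := by
    rw [← himg, Finset.card_image_of_injective _ π.injective]
  set e := A.orderEmbOfFin (rfl : A.card = A.card) with he
  have heA : ∀ k, e k ∈ A := fun k => Finset.orderEmbOfFin_mem A rfl k
  have hgetA : ∀ k, S.get (e k) = S.get i := by
    intro k
    exact (Finset.mem_filter.mp (heA k)).2
  have hfmono : StrictMono (fun k => π (e k)) := by
    intro k l hkl
    exact hπm _ _ (e.strictMono hkl) ((hgetA k).trans (hgetA l).symm)
  have hgmono : StrictMono (fun k => σ (e k)) := by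
    intro k l hkl
    exact hσm _ _ (e.strictMono hkl) ((hgetA k).trans (hgetA l).symm)
  have hf := Finset.orderEmbOfFin_unique hcard (fun k => hπAB _ (heA k)) hfmono
  have hg := Finset.orderEmbOfFin_unique hcard (fun k => hσAB _ (heA k)) hgmono
  have hiA : i ∈ A := by rw [hA, Finset.mem_filter]; exact ⟨Finset.mem_univ _, rfl⟩
  obtain ⟨k, hk⟩ : ∃ k, e k = i := by
    have hrange := Finset.range_orderEmbOfFin A (rfl : A.card = A.card)
    have : i ∈ Set.range e := by rw [hrange]; exact hiA
    exact this
  rw [← hk]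
  exact (congrFun hf k).trans (congrFun hg k).symm

lemma eq_of_strictMono (S T : List α) (hl : S.length = T.length)
    (π : Fin S.length ≃ Fin T.length)
    (hmatch : ∀ i, T.get (π i) = S.get i)
    (hsm : StrictMono (fun i => π i)) : S = T := by
  have hval : ∀ i : Fin S.length, ((π i : Fin T.length) : ℕ) = (i : ℕ) := by
    intro i
    let eo : Fin S.length ≃o Fin T.length :=
      { toEquiv := π, map_rel_iff' := hsm.le_iff_le }
    let eo' : Fin S.length ≃o Fin S.length := eo.trans (Fin.castOrderIso hl.symm)
    have hsub : eo' = OrderIso.refl _ := Subsingleton.elim _ _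
    have := congrArg (fun f => (f i : Fin S.length)) hsub
    have hv : (Fin.cast hl.symm (π i) : Fin S.length) = i := this
    have := congrArg Fin.val hv
    simpa using this
  apply List.ext_getElem hl
  intro n h1 h2
  have hm := hmatch ⟨n, h1⟩
  have hv := hval ⟨n, h1⟩
  rw [List.get_eq_getElem, List.get_eq_getElem] at hm
  rw [← hm]
  congr 1

lemma transfer (S T M : List α)
    (π : Fin S.length ≃ Fin T.length)
    (hmatch : ∀ i, T.get (π i) = S.get i)
    (hmono : ∀ i j, i < j → S.get i = S.get j → π i < π j)
    (u : ℕ) (hu : u + 1 < S.length)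
    (hne : S[u]'(Nat.lt_of_succ_lt hu) ≠ S[u + 1]'hu)
    (hlen : M.length = S.length)
    (hget : ∀ i (hi : i < S.length), M[i]'(by omega) = S[τn u i]'(τn_lt hu hi)) :
    ∃ π' : Fin M.length ≃ Fin T.length,
      (∀ i, T.get (π' i) = M.get i) ∧
      (∀ i j, i < j → M.get i = M.get j → π' i < π' j) ∧
      inversions (fun i => π i) ≤ inversions (fun i => π' i) + 1 ∧
      (π ⟨u + 1, hu⟩ < π ⟨u, Nat.lt_of_succ_lt hu⟩ →
        inversions (fun i => π' i) + 1 = inversions (fun i => π i)) := by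
  set τ := τe u hu with hτ
  have hgetS : ∀ i : Fin M.length, S.get (τ (Fin.cast hlen i)) = M.get i := by
    intro i
    have hi : (i : ℕ) < S.length := hlen ▸ i.isLt
    rw [List.get_eq_getElem, List.get_eq_getElem, hget i.val hi]
    exact gec S (by rw [hτ, τe_val]; exact rfl)
  refine ⟨((finCongr hlen).trans τ).trans π, ?_, ?_, ?_, ?_⟩
  · intro i
    show T.get (π (τ (Fin.cast hlen i))) = M.get i
    rw [hmatch, hgetS]
  · intro i j hij hMeq
    show π (τ (Fin.cast hlen i)) < π (τ (Fin.cast hlen j))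
    rw [← hgetS i, ← hgetS j] at hMeq
    have hij' : Fin.cast hlen i < Fin.cast hlen j := by
      rw [Fin.lt_def] at hij ⊢; exact hij
    by_cases hcase : Fin.cast hlen i = (⟨u, Nat.lt_of_succ_lt hu⟩ : Fin S.length) ∧
        Fin.cast hlen j = (⟨u + 1, hu⟩ : Fin S.length)
    · exfalso
      rw [hcase.1, hcase.2, hτ] at hMeq
      rw [τe, Equiv.swap_apply_left, Equiv.swap_apply_right] at hMeq
      rw [List.get_eq_getElem, List.get_eq_getElem] at hMeq
      exact hne hMeq.symm
    · exact hmono _ _ (τe_lt hu hij' hcase) hMeq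
  · have hcast : inversions (fun i : Fin M.length => π (τ (Fin.cast hlen i)))
        = inversions (fun j => π (τ j)) :=
      inversions_comp_cast (fun j => π (τ j)) hlen
    have hswap := inversions_comp_swap (fun j : Fin S.length => π j) u hu
    rw [← hτ] at hswap
    show inversions (fun i => π i) ≤
      inversions (fun i : Fin M.length => π (τ (Fin.cast hlen i))) + 1
    rw [hcast]
    split_ifs at hswap <;> omega
  · intro hd
    have hcast : inversions (fun i : Fin M.length => π (τ (Fin.cast hlen i)))
        = inversions (fun j => π (τ j)) :=
      inversions_comp_cast (fun j => π (τ j)) hlen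
    have hswap := inversions_comp_swap (fun j : Fin S.length => π j) u hu
    rw [← hτ] at hswap
    rw [if_pos hd, if_neg (asymm hd)] at hswap
    show inversions (fun i : Fin M.length => π (τ (Fin.cast hlen i))) + 1
      = inversions (fun i => π i)
    rw [hcast]
    omega

lemma swaps_ub (T : List α) (N : ℕ) :
    ∀ (S : List α), S.length = T.length → ∀ (π : Fin S.length ≃ Fin T.length),
      (∀ i, T.get (π i) = S.get i) →
      (∀ i j, i < j → S.get i = S.get j → π i < π j) →
      inversions (fun i => π i) = N → StepsIn SwapStep N S T := by
  induction N using Nat.strong_induction_on with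
  | _ N IH =>
  intro S hl π hmatch hmono hinv
  by_cases hdesc : ∃ u, ∃ hu : u + 1 < S.length,
      π ⟨u + 1, hu⟩ < π ⟨u, Nat.lt_of_succ_lt hu⟩
  · obtain ⟨u, hu, hd⟩ := hdesc
    have hne : S[u]'(Nat.lt_of_succ_lt hu) ≠ S[u + 1]'hu := by
      intro h
      have := hmono ⟨u, Nat.lt_of_succ_lt hu⟩ ⟨u + 1, hu⟩
        (Fin.mk_lt_mk.mpr (Nat.lt_succ_self u))
        (by rw [List.get_eq_getElem, List.get_eq_getElem]; exact h)
      exact absurd this (asymm hd)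
    obtain ⟨M, hstep, hlen, hget⟩ := exists_swapStep S u hu
    obtain ⟨π', hm', hmo', _, hexact⟩ := transfer S T M π hmatch hmono u hu hne hlen hget
    have h1 : inversions (fun i => π' i) + 1 = N := by rw [hexact hd, hinv]
    have hrec := IH (N - 1) (by omega) M (hlen.trans hl) π' hm' hmo' (by omega)
    rw [show N = (N - 1) + 1 by omega]
    exact ⟨M, hstep, hrec⟩
  · push_neg at hdesc
    have hadj : ∀ u (hu : u + 1 < S.length),
        π ⟨u, Nat.lt_of_succ_lt hu⟩ < π ⟨u + 1, hu⟩ := by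
      intro u hu
      have hle := hdesc u hu
      rcases lt_or_eq_of_le hle with h | h
      · exact h
      · exfalso
        have := π.injective h
        rw [Fin.ext_iff] at this
        simp at this
    have hsm : StrictMono (fun i => π i) := strictMono_of_adj _ hadj
    have hST : S = T := eq_of_strictMono S T hl π hmatch hsm
    have h0 : inversions (fun i => π i) = 0 :=
      inversions_eq_zero _ (fun i j h1 h2 => absurd (hsm h1) (asymm h2))
    rw [← hinv, h0]
    exact hST

lemma swaps_lb (T : List α) (k : ℕ) :
    ∀ (S : List α) (π : Fin S.length ≃ Fin T.length),
      (∀ i, T.get (π i) = S.get i) →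
      (∀ i j, i < j → S.get i = S.get j → π i < π j) →
      StepsIn SwapStep k S T → inversions (fun i => π i) ≤ k := by
  induction k with
  | zero =>
    intro S π hmatch hmono hstep
    have hST : S = T := hstep
    subst hST
    have hid : ∀ i, π i = i := fun i =>
      matching_unique S S π (Equiv.refl _) hmatch hmono (fun _ => rfl)
        (fun _ _ h _ => h) i
    have h0 : inversions (fun i => π i) = 0 := by
      apply inversions_eq_zero
      intro i j h1 h2
      rw [hid, hid] at h2
      exact absurd h1 (asymm h2)
    omega
  | succ k IH =>
    intro S π hmatch hmono hstep
    obtain ⟨M, hSM, hsteps⟩ := hstep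
    obtain ⟨u, hu, hlen, hget⟩ := swapStep_data hSM
    by_cases heq : S[u]'(Nat.lt_of_succ_lt hu) = S[u + 1]'hu
    · have hMS : M = S := by
        apply List.ext_getElem hlen
        intro i h1 h2
        rw [hget i h2]
        by_cases c1 : i = u
        · exact (gec S (show τn u i = u + 1 by
            simp only [τn]; split_ifs <;> omega)).trans
            (heq.symm.trans (gec S (by omega)))
        · by_cases c2 : i = u + 1
          · exact (gec S (show τn u i = u by
              simp only [τn]; split_ifs <;> omega)).trans
              (heq.trans (gec S (by omega)))
          · exact gec S (by simp only [τn]; split_ifs <;> omega)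
      rw [hMS] at hsteps
      exact (IH S π hmatch hmono hsteps).trans (Nat.le_succ k)
    · obtain ⟨π', hm', hmo', hle, -⟩ := transfer S T M π hmatch hmono u hu heq hlen hget
      exact hle.trans (Nat.add_le_add_right (IH M π' hm' hmo' hsteps) 1)

end Matching

theorem swap_distance_eq_inversions {α : Type*} [DecidableEq α]
    (S T : List α) (hperm : S.Perm T)
    (π : Fin S.length ≃ Fin T.length)
    (hmatch : ∀ i : Fin S.length, T.get (π i) = S.get i)
    (hmono : ∀ i j : Fin S.length, i < j → S.get i = S.get j → π i < π j) :
    sInf {k | StepsIn SwapStep k S T} = inversions (fun i => π i) := by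
  have hl : S.length = T.length := hperm.length_eq
  have h1 : StepsIn SwapStep (inversions (fun i => π i)) S T :=
    swaps_ub T _ S hl π hmatch hmono rfl
  apply le_antisymm
  · exact Nat.sInf_le h1
  · exact le_csInf ⟨_, h1⟩ (fun k hk => swaps_lb T k S π hmatch hmono hk)
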